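/- For any nonzero vectors x, y ∈ ℝ^n with angle θ ∈ [0, π] between them, (1/2)‖x − y‖₂² + ‖x‖₂‖y‖₂ (1/π)(sin θ − θ cos θ) ≤ ‖x − y‖₂². That is, the expected squared distance after a random Gaussian ReLU layer is at most the original squared distance. -/

import Mathlib

open Real
open scoped RealInnerProductSpace

lemma key_ineq (θ : ℝ) (h0 : 0 ≤ θ) (h1 : θ ≤ π) :
    sin θ - θ * cos θ ≤ π * (1 - cos θ) := by
  set f : ℝ → ℝ := fun t => π * (1 - Real.cos t) - (Real.sin t - t * Real.cos t)
  have hf : ∀ t, HasDerivAt f ((π - t) * Real.sin t) t := by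
    intro t
    have h1' : HasDerivAt (fun t : ℝ => π * (1 - Real.cos t)) (π * Real.sin t) t := by
      have := ((Real.hasDerivAt_cos t).const_sub 1).const_mul π
      simpa using this
    have h2' : HasDerivAt (fun t : ℝ => t * Real.cos t) (Real.cos t + t * (-Real.sin t)) t := by
      simpa using (hasDerivAt_id' t).fun_mul (Real.hasDerivAt_cos t)
    have h3' : HasDerivAt (fun t : ℝ => Real.sin t - t * Real.cos t)
        (Real.cos t - (Real.cos t + t * (-Real.sin t))) t :=
      (Real.hasDerivAt_sin t).sub h2'
    have := h1'.fun_sub h3'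
    refine this.congr_deriv ?_
    ring
  have hmono : MonotoneOn f (Set.Icc 0 π) := by
    apply monotoneOn_of_deriv_nonneg (convex_Icc 0 π)
    · exact (Continuous.continuousOn (by continuity))
    · intro t ht
      exact (hf t).differentiableAt.differentiableWithinAt
    · intro t ht
      rw [(hf t).deriv]
      simp only [interior_Icc, Set.mem_Ioo] at ht
      have : 0 ≤ Real.sin t := Real.sin_nonneg_of_nonneg_of_le_pi ht.1.le ht.2.le
      nlinarith
  have h := hmono (Set.mem_Icc.2 ⟨le_refl 0, Real.pi_pos.le⟩)
    (Set.mem_Icc.2 ⟨h0, h1⟩) h0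
  simp [f] at h
  linarith

theorem expected_sq_distance_after_layer_le
    (n : ℕ) (x y : EuclideanSpace ℝ (Fin n)) (hx : x ≠ 0) (hy : y ≠ 0)
    (θ : ℝ) (hθ : θ = arccos (⟪x, y⟫ / (‖x‖ * ‖y‖))) :
    1 / 2 * ‖x - y‖ ^ 2 + ‖x‖ * ‖y‖ * (1 / π * (sin θ - θ * cos θ))
      ≤ ‖x - y‖ ^ 2 := by
  have habs : |⟪x, y⟫ / (‖x‖ * ‖y‖)| ≤ 1 := abs_real_inner_div_norm_mul_norm_le_one x y
  have h1 : -1 ≤ ⟪x, y⟫ / (‖x‖ * ‖y‖) := (abs_le.mp habs).1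
  have h2 : ⟪x, y⟫ / (‖x‖ * ‖y‖) ≤ 1 := (abs_le.mp habs).2
  have hθ0 : 0 ≤ θ := hθ ▸ Real.arccos_nonneg _
  have hθπ : θ ≤ π := hθ ▸ Real.arccos_le_pi _
  have hcos : cos θ = ⟪x, y⟫ / (‖x‖ * ‖y‖) := hθ ▸ Real.cos_arccos h1 h2
  have hxn : (0:ℝ) < ‖x‖ := norm_pos_iff.2 hx
  have hyn : (0:ℝ) < ‖y‖ := norm_pos_iff.2 hy
  have hinner : ⟪x, y⟫ = ‖x‖ * ‖y‖ * cos θ := by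
    rw [hcos]; field_simp
  have hnorm : ‖x - y‖ ^ 2 = ‖x‖ ^ 2 - 2 * ⟪x, y⟫ + ‖y‖ ^ 2 := norm_sub_sq_real x y
  have hkey := key_ineq θ hθ0 hθπ
  have hπ : (0:ℝ) < π := Real.pi_pos
  rw [hnorm, hinner]
  have hamgm : 2 * (‖x‖ * ‖y‖) ≤ ‖x‖ ^ 2 + ‖y‖ ^ 2 := by nlinarith [sq_nonneg (‖x‖ - ‖y‖)]
  have hmul : ‖x‖ * ‖y‖ * (sin θ - θ * cos θ) ≤ ‖x‖ * ‖y‖ * (π * (1 - cos θ)) := by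
    apply mul_le_mul_of_nonneg_left hkey (by positivity)
  have hdiv : 1 / π * (sin θ - θ * cos θ) ≤ 1 - cos θ := by
    rw [div_mul_eq_mul_div, one_mul, div_le_iff₀ hπ]
    nlinarith
  have hmul2 : ‖x‖ * ‖y‖ * (1 / π * (sin θ - θ * cos θ)) ≤ ‖x‖ * ‖y‖ * (1 - cos θ) :=
    mul_le_mul_of_nonneg_left hdiv (by positivity)
  nlinarith [mul_pos hxn hyn]
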